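/- Let Q ⊆ R^d be a convex body contained in the slab {z : |z_i| ≤ M} (the i-th coordinate bounded by M in absolute value), and let Δ ⊆ Q be a convex subset containing two points whose i-th coordinates differ by 2M', with M' ≤ M. Let u = (0,…,0,u_i,…,u_d) be a unit vector with u_i ≥ 0, and let u' be the unit vector obtained by zeroing the i-th coordinate of u and renormalizing (assuming u_i < 1). If wid_{u'}(Δ) ≥ W and u_i·M ≤ W/5 and M ≥ wid(Q)/2·(1/1), then wid_u(Δ) ≥ sqrt(1−u_i^2)·W − 2 u_i M. -/

import Mathlib

noncomputable def dirWidth {d : ℕ} (u : EuclideanSpace ℝ (Fin d))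
    (A : Set (EuclideanSpace ℝ (Fin d))) : ℝ :=
  sSup ((fun p => (inner ℝ u p : ℝ)) '' A) - sInf ((fun p => (inner ℝ u p : ℝ)) '' A)

noncomputable def setWidth {d : ℕ} (A : Set (EuclideanSpace ℝ (Fin d))) : ℝ :=
  sInf {w | ∃ u : EuclideanSpace ℝ (Fin d), ‖u‖ = 1 ∧ w = dirWidth u A}

theorem stmt_10 {d : ℕ} (i : Fin d) (Q Δ : Set (EuclideanSpace ℝ (Fin d)))
    (M M' W : ℝ)
    (hQc : IsCompact Q) (hQconv : Convex ℝ Q)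
    (hΔconv : Convex ℝ Δ) (hΔne : Δ.Nonempty) (hΔQ : Δ ⊆ Q)
    (hslab : ∀ z ∈ Q, |z i| ≤ M)
    (hM' : M' ≤ M)
    (hpts : ∃ p ∈ Δ, ∃ q ∈ Δ, p i - q i = 2 * M')
    (u u' : EuclideanSpace ℝ (Fin d))
    (hu : ‖u‖ = 1) (huzero : ∀ j : Fin d, (j : ℕ) < (i : ℕ) → u j = 0)
    (hui0 : 0 ≤ u i) (hui1 : u i < 1)
    (hu' : ‖u'‖ = 1) (hu'i : u' i = 0)
    (hu'j : ∀ j : Fin d, j ≠ i → u' j = u j / Real.sqrt (1 - (u i) ^ 2))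
    (hW : W ≤ dirWidth u' Δ)
    (h5 : u i * M ≤ W / 5)
    (hM : setWidth Q / 2 ≤ M) :
    Real.sqrt (1 - (u i) ^ 2) * W - 2 * (u i) * M ≤ dirWidth u Δ := by
  set s : ℝ := Real.sqrt (1 - (u i) ^ 2) with hs_def
  have hsq : (u i) ^ 2 < 1 := by
    have := pow_lt_one₀ hui0 hui1 (two_ne_zero)
    simpa using this
  have hs_pos : 0 < s := Real.sqrt_pos.mpr (by linarith)
  -- key identity
  have key : ∀ p : EuclideanSpace ℝ (Fin d),
      (inner ℝ u p : ℝ) = s * (inner ℝ u' p : ℝ) + u i * p i := by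
    intro p
    rw [PiLp.inner_apply, PiLp.inner_apply]
    simp only [RCLike.inner_apply, conj_trivial]
    rw [Finset.mul_sum]
    have : ∀ j ∈ Finset.univ, p j * u j
        = s * (p j * u' j) + (if j = i then u i * p i else 0) := by
      intro j _
      by_cases hj : j = i
      · subst hj; simp [hu'i, mul_comm]
      · rw [hu'j j hj, if_neg hj]
        field_simp
        ring
    rw [Finset.sum_congr rfl this, Finset.sum_add_distrib, Finset.sum_ite_eq' Finset.univ i]
    simp
  -- boundedness
  obtain ⟨R, hR⟩ := hQc.isBounded.subset_closedBall 0
  have hbound : ∀ (v : EuclideanSpace ℝ (Fin d)), ‖v‖ = 1 →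
      ∀ x ∈ (fun p => (inner ℝ v p : ℝ)) '' Δ, |x| ≤ R := by
    intro v hv x hx
    obtain ⟨p, hp, rfl⟩ := hx
    have h1 : |(inner ℝ v p : ℝ)| ≤ ‖v‖ * ‖p‖ := abs_real_inner_le_norm v p
    have h2 : ‖p‖ ≤ R := by
      have := hR (hΔQ hp)
      simpa [Metric.mem_closedBall, dist_zero_right] using this
    calc |(inner ℝ v p : ℝ)| ≤ ‖v‖ * ‖p‖ := h1
      _ = ‖p‖ := by rw [hv, one_mul]
      _ ≤ R := h2
  have hbddA : ∀ (v : EuclideanSpace ℝ (Fin d)), ‖v‖ = 1 →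
      BddAbove ((fun p => (inner ℝ v p : ℝ)) '' Δ) :=
    fun v hv => ⟨R, fun x hx => (abs_le.mp (hbound v hv x hx)).2⟩
  have hbddB : ∀ (v : EuclideanSpace ℝ (Fin d)), ‖v‖ = 1 →
      BddBelow ((fun p => (inner ℝ v p : ℝ)) '' Δ) :=
    fun v hv => ⟨-R, fun x hx => (abs_le.mp (hbound v hv x hx)).1⟩
  have hslabΔ : ∀ p ∈ Δ, |p i| ≤ M := fun p hp => hslab p (hΔQ hp)
  -- sup bound
  have hsup : s * sSup ((fun p => (inner ℝ u' p : ℝ)) '' Δ) - u i * M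
      ≤ sSup ((fun p => (inner ℝ u p : ℝ)) '' Δ) := by
    have h1 : sSup ((fun p => (inner ℝ u' p : ℝ)) '' Δ)
        ≤ (sSup ((fun p => (inner ℝ u p : ℝ)) '' Δ) + u i * M) / s := by
      apply csSup_le (hΔne.image _)
      rintro x ⟨p, hp, rfl⟩
      rw [le_div_iff₀ hs_pos]
      have hf : (inner ℝ u p : ℝ) ≤ sSup ((fun p => (inner ℝ u p : ℝ)) '' Δ) :=
        le_csSup (hbddA u hu) ⟨p, hp, rfl⟩
      have hpi : -M ≤ p i := (abs_le.mp (hslabΔ p hp)).1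
      have hk := key p
      nlinarith [mul_le_mul_of_nonneg_left hpi hui0]
    have h2 := mul_le_mul_of_nonneg_left h1 hs_pos.le
    rw [mul_div_cancel₀ _ hs_pos.ne'] at h2
    linarith
  -- inf bound
  have hinf : sInf ((fun p => (inner ℝ u p : ℝ)) '' Δ)
      ≤ s * sInf ((fun p => (inner ℝ u' p : ℝ)) '' Δ) + u i * M := by
    have h1 : (sInf ((fun p => (inner ℝ u p : ℝ)) '' Δ) - u i * M) / s
        ≤ sInf ((fun p => (inner ℝ u' p : ℝ)) '' Δ) := by
      apply le_csInf (hΔne.image _)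
      rintro x ⟨p, hp, rfl⟩
      rw [div_le_iff₀ hs_pos]
      have hf : sInf ((fun p => (inner ℝ u p : ℝ)) '' Δ) ≤ (inner ℝ u p : ℝ) :=
        csInf_le (hbddB u hu) ⟨p, hp, rfl⟩
      have hpi : p i ≤ M := (abs_le.mp (hslabΔ p hp)).2
      have hk := key p
      nlinarith [mul_le_mul_of_nonneg_left hpi hui0]
    have h2 := mul_le_mul_of_nonneg_left h1 hs_pos.le
    rw [mul_div_cancel₀ _ hs_pos.ne'] at h2
    linarith
  have hsW : s * W ≤ s * dirWidth u' Δ := mul_le_mul_of_nonneg_left hW hs_pos.le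
  unfold dirWidth at hsW ⊢
  linarith
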